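/- Let R > 0 and 0 < 2M < R, and set χ = 2M/R. Let m : [0,R] → ℝ be continuous with m(R) = M and 0 ≤ 2m(r) < r for all r ∈ (0,R], and let ζ : [0,R] → ℝ be continuous on [0,R], differentiable on (0,R), with ζ(R) = √(1−χ). Suppose that for every r ∈ (0,R) one has m(r) ≥ M r³/R³ and (1/r)·√(1−2m(r)/r)·ζ′(r) ≥ M/R³. Then for every r ∈ [0,R], ζ(r) ≤ (1/2)·(3√(1−χ) − √(1−χ(r/R)²)); that is, ζ is bounded above pointwise by the corresponding metric function ζ*(r) of the constant-density (interior Schwarzschild) star of the same mass and radius. -/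

import Mathlib

open Real Set

theorem zeta_bounded_by_interior_schwarzschild
    (R M χ : ℝ) (hR : 0 < R) (hM : 0 < 2 * M) (hMR : 2 * M < R)
    (hχ : χ = 2 * M / R)
    (m ζ ζ' : ℝ → ℝ)
    (hm_cont : ContinuousOn m (Icc 0 R))
    (hmR : m R = M)
    (hm_bound : ∀ r ∈ Ioc (0:ℝ) R, 0 ≤ 2 * m r ∧ 2 * m r < r)
    (hζ_cont : ContinuousOn ζ (Icc 0 R))
    (hζ_deriv : ∀ r ∈ Ioo (0:ℝ) R, HasDerivAt ζ (ζ' r) r)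
    (hζR : ζ R = Real.sqrt (1 - χ))
    (hm_ge : ∀ r ∈ Ioo (0:ℝ) R, m r ≥ M * r ^ 3 / R ^ 3)
    (hineq : ∀ r ∈ Ioo (0:ℝ) R,
      (1 / r) * Real.sqrt (1 - 2 * m r / r) * ζ' r ≥ M / R ^ 3) :
    ∀ r ∈ Icc (0:ℝ) R,
      ζ r ≤ (1 / 2) * (3 * Real.sqrt (1 - χ) - Real.sqrt (1 - χ * (r / R) ^ 2)) := by
  have hMpos : 0 < M := by linarith
  have hχ0 : 0 < χ := by rw [hχ]; positivity
  have hχ1 : χ < 1 := by rw [hχ, div_lt_one hR]; linarith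
  set f : ℝ → ℝ := fun s => (1/2) * (3 * Real.sqrt (1 - χ) - Real.sqrt (1 - χ * (s / R) ^ 2))
    with hf
  have hu_pos : ∀ s ∈ Icc (0:ℝ) R, 0 < 1 - χ * (s / R) ^ 2 := by
    intro s hs
    have h1 : (s / R) ^ 2 ≤ 1 := by
      have : 0 ≤ s / R := div_nonneg hs.1 hR.le
      have : s / R ≤ 1 := (div_le_one hR).mpr hs.2
      nlinarith
    nlinarith
  have hf_deriv : ∀ s ∈ Ioo (0:ℝ) R,
      HasDerivAt f (M * s / (R ^ 3 * Real.sqrt (1 - χ * (s / R) ^ 2))) s := by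
    intro s hs
    have hu := hu_pos s ⟨hs.1.le, hs.2.le⟩
    have hg : HasDerivAt (fun t : ℝ => 1 - χ * (t / R) ^ 2)
        (-(χ * ((2 : ℕ) * (s / R) ^ 1 * (1 / R)))) s := by
      have h1 : HasDerivAt (fun t : ℝ => t / R) (1 / R) s := by
        simpa using (hasDerivAt_id s).div_const R
      exact ((h1.pow 2).const_mul χ).const_sub 1
    have hsq : HasDerivAt (fun t : ℝ => Real.sqrt (1 - χ * (t / R) ^ 2))
        ((-(χ * ((2 : ℕ) * (s / R) ^ 1 * (1 / R)))) /
          (2 * Real.sqrt (1 - χ * (s / R) ^ 2))) s := hg.sqrt hu.ne'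
    have := (hsq.const_sub (3 * Real.sqrt (1 - χ))).const_mul (1/2 : ℝ)
    refine this.congr_deriv ?_
    have hsqrt_pos : 0 < Real.sqrt (1 - χ * (s / R) ^ 2) := Real.sqrt_pos.mpr hu
    rw [hχ]
    field_simp
    ring
  have hf_cont : ContinuousOn f (Icc 0 R) := by
    apply Continuous.continuousOn
    fun_prop
  have hderivφ : ∀ s ∈ Ioo (0:ℝ) R, HasDerivAt (fun t => ζ t - f t)
      (ζ' s - M * s / (R ^ 3 * Real.sqrt (1 - χ * (s / R) ^ 2))) s :=
    fun s hs => (hζ_deriv s hs).sub (hf_deriv s hs)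
  have hmono : MonotoneOn (fun t => ζ t - f t) (Icc 0 R) := by
    apply monotoneOn_of_deriv_nonneg (convex_Icc 0 R) (hζ_cont.sub hf_cont)
    · intro s hs
      rw [interior_Icc] at hs
      exact (hderivφ s hs).differentiableAt.differentiableWithinAt
    · intro s hs
      rw [interior_Icc] at hs
      rw [show (ζ - f) = fun t => ζ t - f t from rfl, (hderivφ s hs).deriv]
      -- show f' s ≤ ζ' s
      have hs0 : 0 < s := hs.1
      have hu := hu_pos s ⟨hs0.le, hs.2.le⟩
      have hsu : 0 < Real.sqrt (1 - χ * (s / R) ^ 2) := Real.sqrt_pos.mpr hu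
      have hmb := hm_bound s ⟨hs0, hs.2.le⟩
      have hw_pos : 0 < 1 - 2 * m s / s := by
        have : 2 * m s / s < 1 := (div_lt_one hs0).mpr hmb.2
        linarith
      have hw : 0 < Real.sqrt (1 - 2 * m s / s) := Real.sqrt_pos.mpr hw_pos
      have hge := hm_ge s hs
      -- 1 - 2 m s / s ≤ 1 - χ (s/R)^2
      have hle : 1 - 2 * m s / s ≤ 1 - χ * (s / R) ^ 2 := by
        rw [hχ]
        have h3 : M * s ^ 3 / R ^ 3 ≤ m s := hge
        rw [div_le_iff₀ (by positivity : (0:ℝ) < R ^ 3)] at h3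
        have heq : 2 * M / R * (s / R) ^ 2 = 2 * M * s ^ 2 / R ^ 3 := by
          field_simp
        have key : 2 * M / R * (s / R) ^ 2 ≤ 2 * m s / s := by
          rw [heq, div_le_div_iff₀ (by positivity : (0:ℝ) < R ^ 3) hs0]
          nlinarith
        linarith
      have hwle : Real.sqrt (1 - 2 * m s / s) ≤ Real.sqrt (1 - χ * (s / R) ^ 2) :=
        Real.sqrt_le_sqrt hle
      have hζ'ge : ζ' s ≥ M / R ^ 3 * s / Real.sqrt (1 - 2 * m s / s) := by
        have h := hineq s hs
        rw [ge_iff_le, div_le_iff₀ hw]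
        have := mul_le_mul_of_nonneg_left h (le_of_lt hs0)
        calc M / R ^ 3 * s = s * (M / R ^ 3) := by ring
          _ ≤ s * (1 / s * Real.sqrt (1 - 2 * m s / s) * ζ' s) :=
              mul_le_mul_of_nonneg_left h hs0.le
          _ = ζ' s * Real.sqrt (1 - 2 * m s / s) := by field_simp
      have : M * s / (R ^ 3 * Real.sqrt (1 - χ * (s / R) ^ 2))
          ≤ M / R ^ 3 * s / Real.sqrt (1 - 2 * m s / s) := by
        rw [div_le_div_iff₀ (by positivity) hw]
        have hnum : 0 ≤ M * s := by positivity
        have heq : M / R ^ 3 * s * (R ^ 3 * Real.sqrt (1 - χ * (s / R) ^ 2))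
            = M * s * Real.sqrt (1 - χ * (s / R) ^ 2) := by
          field_simp
        rw [heq]
        exact mul_le_mul_of_nonneg_left hwle hnum
      linarith
  intro r hr
  have hRmem : R ∈ Icc (0:ℝ) R := ⟨hR.le, le_refl R⟩
  have h := hmono hr hRmem hr.2
  have hfR : f R = Real.sqrt (1 - χ) := by
    simp only [hf]
    rw [div_self hR.ne']
    norm_num
    ring
  have h' : ζ r - f r ≤ ζ R - f R := h
  rw [hζR, hfR] at h'
  have h2 : ζ r ≤ f r := by linarith
  exact h2
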